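/- Let p > r and a_r := ((r−p+λ+m) + √((r−p+λ+m)² + 4λ(p−r)))/(2(p−r)), and assume (μ−r)/(σ²(a_r+1)) < 1. Let w₀ > 0 and define g(w) := (w/w₀)^{−a_r} for w > 0. Then for every w > 0 and every γ ∈ [0, w], one has [rw + (μ−r)γ − pw]·g′(w) + (1/2)σ²γ²·g″(w) − λ·g(w) ≥ 0, with equality if and only if γ = ((μ−r)/(σ²(a_r+1)))·w. -/

import Mathlib

theorem stmt_8 (r mu sigma lam p m ar w0 : ℝ)
    (hr : 0 < r) (hmu : r < mu) (hs : 0 < sigma) (hlam : 0 < lam) (hp : r < p)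
    (hm : m = (mu - r)^2 / (2 * sigma^2))
    (har : ar = ((r - p + lam + m) + Real.sqrt ((r - p + lam + m)^2 + 4*lam*(p - r)))
            / (2*(p - r)))
    (hcase : (mu - r) / (sigma^2 * (ar + 1)) < 1)
    (hw0 : 0 < w0)
    (g : ℝ → ℝ) (hg : ∀ w, g w = (w / w0) ^ (-ar)) :
    ∀ w : ℝ, 0 < w → ∀ γ ∈ Set.Icc 0 w,
      0 ≤ (r * w + (mu - r) * γ - p * w) * deriv g w
            + (1/2) * sigma^2 * γ^2 * deriv (deriv g) w - lam * g w ∧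
      ((r * w + (mu - r) * γ - p * w) * deriv g w
            + (1/2) * sigma^2 * γ^2 * deriv (deriv g) w - lam * g w = 0
        ↔ γ = ((mu - r) / (sigma^2 * (ar + 1))) * w) := by
  have hg' : g = fun w => (w / w0) ^ (-ar) := funext hg
  subst hg'
  set b := r - p + lam + m with hb
  have hpr : (0:ℝ) < p - r := by linarith
  have hD : 0 ≤ b^2 + 4*lam*(p-r) := by nlinarith [sq_nonneg b]
  have hsq : Real.sqrt (b^2+4*lam*(p-r)) ^ 2 = b^2+4*lam*(p-r) := Real.sq_sqrt hD
  have harpos : 0 < ar := by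
    have h1 : Real.sqrt (b^2) < Real.sqrt (b^2+4*lam*(p-r)) := by
      apply Real.sqrt_lt_sqrt (sq_nonneg b); nlinarith
    rw [Real.sqrt_sq_eq_abs] at h1
    have h2 : -b < Real.sqrt (b^2+4*lam*(p-r)) := lt_of_le_of_lt (neg_le_abs b) h1
    rw [har]
    exact div_pos (by linarith) (by linarith)
  have h2 : 2*(p-r)*ar = b + Real.sqrt (b^2+4*lam*(p-r)) := by
    rw [har]; field_simp
  have h3 : (2*(p-r)*ar - b)^2 = b^2 + 4*lam*(p-r) := by
    rw [show 2*(p-r)*ar - b = Real.sqrt (b^2+4*lam*(p-r)) by linarith]; exact hsq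
  have h4 : 4*(p-r)*((p-r)*ar^2 - b*ar - lam) = 0 := by linear_combination h3
  have hquad : (p-r)*ar^2 - b*ar - lam = 0 := by
    rcases mul_eq_zero.mp h4 with h | h
    · nlinarith
    · exact h
  have hkey : (ar+1)*(ar*(p-r) - lam) = m*ar := by rw [hb] at hquad; linear_combination hquad
  have hm2 : (mu-r)^2 = 2*sigma^2*m := by rw [hm]; field_simp
  -- derivatives
  have hdd : ∀ w : ℝ, 0 < w →
      HasDerivAt (fun w => (w / w0) ^ (-ar)) (-ar * (w/w0)^(-ar-1) / w0) w := by
    intro w hw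
    have h1 : HasDerivAt (fun w : ℝ => w / w0) (1/w0) w := by
      simpa using (hasDerivAt_id w).div_const w0
    have h2 := (Real.hasDerivAt_rpow_const (p := -ar)
      (Or.inl (div_pos hw hw0).ne')).comp w h1
    exact h2.congr_deriv (by ring)
  have hderiv : ∀ w : ℝ, 0 < w →
      deriv (fun w => (w / w0) ^ (-ar)) w = -ar * (w/w0)^(-ar-1) / w0 := fun w hw =>
    (hdd w hw).deriv
  intro w hw γ hγ
  have hwd : 0 < w / w0 := div_pos hw hw0
  have hd2 : deriv (deriv (fun w => (w / w0) ^ (-ar))) w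
      = -ar/w0 * ((-ar-1) * (w/w0)^(-ar-2) / w0) := by
    have hev : deriv (fun w => (w / w0) ^ (-ar))
        =ᶠ[nhds w] (fun w => -ar/w0 * (w/w0)^(-ar-1)) := by
      filter_upwards [isOpen_Ioi.mem_nhds (show w ∈ Set.Ioi 0 from hw)] with x hx
      rw [hderiv x hx]; ring
    rw [hev.deriv_eq]
    have h1 : HasDerivAt (fun x : ℝ => x / w0) (1/w0) w := by
      simpa using (hasDerivAt_id w).div_const w0
    have h2' : HasDerivAt (fun x : ℝ => -ar/w0 * (x/w0)^(-ar-1))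
        (-ar/w0 * ((-ar-1) * (w/w0)^(-ar-1-1) * (1/w0))) w :=
      ((Real.hasDerivAt_rpow_const (p := -ar-1)
        (Or.inl hwd.ne')).comp w h1).const_mul (-ar/w0)
    rw [h2'.deriv, show -ar-1-1 = -ar-2 by ring]; ring
  rw [hderiv w hw, hd2]
  -- power identities
  set P := (w/w0)^(-ar) with hPdef
  have hPpos : 0 < P := Real.rpow_pos_of_pos hwd _
  have hP1 : (w/w0)^(-ar-1) = P * (w0/w) := by
    rw [show -ar-1 = -ar + (-1) by ring, Real.rpow_add hwd, Real.rpow_neg_one, inv_div]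
  have hP2 : (w/w0)^(-ar-2) = P * (w0/w)^2 := by
    rw [show -ar-2 = -ar + (-1) + (-1) by ring, Real.rpow_add hwd, Real.rpow_add hwd,
      Real.rpow_neg_one, inv_div]
    ring
  rw [hP1, hP2]
  obtain ⟨γs, hγs⟩ : ∃ γs, γs = ((mu - r) / (sigma^2 * (ar + 1))) * w := ⟨_, rfl⟩
  rw [← hγs]
  have harne : ar + 1 ≠ 0 := by positivity
  have hγseq : sigma^2*(ar+1)*γs = (mu-r)*w := by
    rw [hγs]; field_simp
  have hγsq : (sigma^2*(ar+1)*γs)^2 = ((mu-r)*w)^2 := by rw [hγseq]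
  have hpoly : sigma^2*(2*w^2*(ar+1)*((p-r)*ar - lam)) - sigma^2*(2*w*(ar+1)*(mu-r)*ar)*γ
      + sigma^4*ar*(ar+1)^2*γ^2 = sigma^4*ar*(ar+1)^2*(γ-γs)^2 := by
    linear_combination (2*sigma^2*w^2) * hkey + (2*sigma^2*ar*(ar+1)*γ) * hγseq
      - ar * hγsq - (ar*w^2) * hm2
  have hpoly2 : 2*w^2*((p-r)*ar - lam) - 2*w*(mu-r)*ar*γ
      + sigma^2*ar*(ar+1)*γ^2 = sigma^2*ar*(ar+1)*(γ-γs)^2 := by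
    apply mul_left_cancel₀ (show sigma^2*(ar+1) ≠ 0 by positivity)
    linear_combination hpoly
  have hEq : (r * w + (mu - r) * γ - p * w) * (-ar * (P * (w0/w)) / w0)
      + (1/2) * sigma^2 * γ^2 * (-ar/w0 * ((-ar-1) * (P * (w0/w)^2) / w0)) - lam * P
      = P * (sigma^2 * ar * (ar+1) / (2*w^2)) * (γ - γs)^2 := by
    field_simp
    linear_combination hpoly2
  rw [hEq]
  have hkpos : 0 < P * (sigma^2 * ar * (ar+1) / (2*w^2)) := by positivity
  refine ⟨by positivity, ?_, ?_⟩
  · intro h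
    have h5 : (γ - γs)^2 = 0 := by
      rcases mul_eq_zero.mp h with h | h
      · exact absurd h hkpos.ne'
      · exact h
    have h6 := pow_eq_zero_iff (n := 2) (by norm_num) |>.mp h5
    linarith [sub_eq_zero.mp h6]
  · intro h; rw [h]; ring
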